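/- arXiv:2503.05717 — 3 statements merged into one kernel-verified Lean document; each statement's English description precedes it below -/
import Mathlib

section
/- Unique solvability of the strain in terms of the stress: let E > 0, ν ∈ (−1, 1/2), β ∈ ℝ, and let T be a real symmetric 3×3 matrix with β(1 − 2ν) tr T ≠ E. Then there exists a unique real symmetric 3×3 matrix ε with 1 + β tr ε ≠ 0 satisfying the density-dependent constitutive relation ε = C₁(1 + β tr ε) T + C₂(1 + β tr ε)(tr T) I₃; it is given explicitly by ε = (E/(E − β(1 − 2ν) tr T)) (C₁ T + C₂ (tr T) I₃), and its trace satisfies tr ε = (1 − 2ν) tr T / (E − β(1 − 2ν) tr T). -/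
open Matrix

/-- Unique solvability of the strain in terms of the stress for the density-dependent
constitutive relation `ε = C₁(1 + β tr ε) T + C₂(1 + β tr ε)(tr T) I₃` with
`C₁ = (1+ν)/E`, `C₂ = −ν/E`: if `β (1 − 2ν) tr T ≠ E`, there is a unique symmetric `ε`
with `1 + β tr ε ≠ 0` satisfying the relation; it is given explicitly by
`ε = (E/(E − β(1−2ν) tr T)) (C₁ T + C₂ (tr T) I₃)`, and
`tr ε = (1 − 2ν) tr T / (E − β(1−2ν) tr T)`. -/
theorem unique_strain_from_stress (E ν β : ℝ) (hE : 0 < E)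
    (hν₁ : -1 < ν) (hν₂ : ν < 1 / 2)
    (T : Matrix (Fin 3) (Fin 3) ℝ) (hT : T.IsSymm)
    (hden : β * (1 - 2 * ν) * T.trace ≠ E) :
    (∃! ε : Matrix (Fin 3) (Fin 3) ℝ, ε.IsSymm ∧ 1 + β * ε.trace ≠ 0 ∧
      ε = ((1 + ν) / E * (1 + β * ε.trace)) • T
          + ((-ν / E) * (1 + β * ε.trace) * T.trace) • (1 : Matrix (Fin 3) (Fin 3) ℝ)) ∧
    (∀ ε : Matrix (Fin 3) (Fin 3) ℝ,
      (ε.IsSymm ∧ 1 + β * ε.trace ≠ 0 ∧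
        ε = ((1 + ν) / E * (1 + β * ε.trace)) • T
            + ((-ν / E) * (1 + β * ε.trace) * T.trace) • (1 : Matrix (Fin 3) (Fin 3) ℝ)) →
      ε = (E / (E - β * (1 - 2 * ν) * T.trace)) •
            (((1 + ν) / E) • T + ((-ν / E) * T.trace) • (1 : Matrix (Fin 3) (Fin 3) ℝ)) ∧
      ε.trace = (1 - 2 * ν) * T.trace / (E - β * (1 - 2 * ν) * T.trace)) := by
  set t := T.trace with ht
  set D := E - β * (1 - 2 * ν) * t with hD
  have hE0 : E ≠ 0 := ne_of_gt hE
  have hD0 : D ≠ 0 := sub_ne_zero.mpr (fun h => hden h.symm)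
  -- key: any solution has the given trace
  have key : ∀ ε : Matrix (Fin 3) (Fin 3) ℝ,
      (ε.IsSymm ∧ 1 + β * ε.trace ≠ 0 ∧
        ε = ((1 + ν) / E * (1 + β * ε.trace)) • T
            + ((-ν / E) * (1 + β * ε.trace) * t) • (1 : Matrix (Fin 3) (Fin 3) ℝ)) →
      ε.trace = (1 - 2 * ν) * t / D := by
    intro ε ⟨_, hne, heq⟩
    have htr : ε.trace = (1 + ν) / E * (1 + β * ε.trace) * t
        + (-ν / E) * (1 + β * ε.trace) * t * 3 := by
      have := congrArg Matrix.trace heq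
      simpa [Matrix.trace_add, Matrix.trace_smul, Matrix.trace_one, smul_eq_mul] using this
    field_simp at htr ⊢
    ring_nf at htr ⊢
    nlinarith [htr]
  -- the candidate solution
  set ε₀ : Matrix (Fin 3) (Fin 3) ℝ :=
    (E / D) • (((1 + ν) / E) • T + ((-ν / E) * t) • (1 : Matrix (Fin 3) (Fin 3) ℝ)) with hε₀
  have htr0 : ε₀.trace = (1 - 2 * ν) * t / D := by
    rw [hε₀]
    simp [Matrix.trace_add, Matrix.trace_smul, Matrix.trace_one, smul_eq_mul]
    field_simp
    ring
  have hfac : 1 + β * ε₀.trace = E / D := by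
    rw [htr0, hD]; field_simp; ring
  have hne0 : 1 + β * ε₀.trace ≠ 0 := by
    rw [hfac]; exact div_ne_zero hE0 hD0
  have hsym0 : ε₀.IsSymm := by
    rw [hε₀]
    unfold Matrix.IsSymm at hT ⊢
    simp [Matrix.transpose_smul, Matrix.transpose_add, hT]
  have heq0 : ε₀ = ((1 + ν) / E * (1 + β * ε₀.trace)) • T
      + ((-ν / E) * (1 + β * ε₀.trace) * t) • (1 : Matrix (Fin 3) (Fin 3) ℝ) := by
    rw [hfac, hε₀, smul_add, smul_smul, smul_smul]
    congr 1
    · congr 1; field_simp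
    · congr 1; field_simp
  have main : ∀ ε : Matrix (Fin 3) (Fin 3) ℝ,
      (ε.IsSymm ∧ 1 + β * ε.trace ≠ 0 ∧
        ε = ((1 + ν) / E * (1 + β * ε.trace)) • T
            + ((-ν / E) * (1 + β * ε.trace) * t) • (1 : Matrix (Fin 3) (Fin 3) ℝ)) →
      ε = ε₀ ∧ ε.trace = (1 - 2 * ν) * t / D := by
    intro ε hε
    have htr := key ε hε
    refine ⟨?_, htr⟩
    obtain ⟨_, _, heq⟩ := hε
    have hfacε : 1 + β * ε.trace = E / D := by
      rw [htr, hD]; field_simp; ring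
    rw [heq, hfacε, hε₀, smul_add, smul_smul, smul_smul]
    congr 1
    · congr 1; field_simp
    · congr 1; field_simp
  constructor
  · exact ⟨ε₀, ⟨hsym0, hne0, heq0⟩, fun ε hε => (main ε hε).1⟩
  · intro ε hε
    exact ⟨(main ε hε).1, (main ε hε).2⟩
end

section
/- Let E > 0, ν ∈ (−1, 1/2), and β ∈ ℝ. The stress map ε ↦ 𝔼[ε]/(1 + β tr ε) is a bijection from the set {ε : ε real symmetric 3×3, 1 + β tr ε ≠ 0} onto the set {T : T real symmetric 3×3, β(1 − 2ν) tr T ≠ E}. -/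
open Matrix

/-- The fourth-order elasticity tensor:
`𝔼[ε] = (E/(1+ν)) ε + (ν E/((1−2ν)(1+ν))) (tr ε) I₃`. -/
noncomputable def elasticityTensor (E ν : ℝ) (ε : Matrix (Fin 3) (Fin 3) ℝ) :
    Matrix (Fin 3) (Fin 3) ℝ :=
  (E / (1 + ν)) • ε + (ν * E / ((1 - 2 * ν) * (1 + ν)) * ε.trace) • (1 : Matrix (Fin 3) (Fin 3) ℝ)

/-- For `E > 0`, `ν ∈ (−1, 1/2)` and `β ∈ ℝ`, the stress map `ε ↦ 𝔼[ε]/(1 + β tr ε)` is a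
bijection from `{ε symmetric : 1 + β tr ε ≠ 0}` onto `{T symmetric : β(1−2ν) tr T ≠ E}`. -/
theorem stress_map_bijective (E ν β : ℝ) (hE : 0 < E) (hν₁ : -1 < ν) (hν₂ : ν < 1 / 2) :
    Set.BijOn (fun ε : Matrix (Fin 3) (Fin 3) ℝ => (1 + β * ε.trace)⁻¹ • elasticityTensor E ν ε)
      {ε : Matrix (Fin 3) (Fin 3) ℝ | ε.IsSymm ∧ 1 + β * ε.trace ≠ 0}
      {T : Matrix (Fin 3) (Fin 3) ℝ | T.IsSymm ∧ β * (1 - 2 * ν) * T.trace ≠ E} := by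
  have h1ν : (1 + ν) ≠ 0 := by linarith
  have h2ν : (1 - 2 * ν) ≠ 0 := by linarith
  have hE0 : E ≠ 0 := ne_of_gt hE
  have ha : E / (1 + ν) ≠ 0 := div_ne_zero hE0 h1ν
  have htr1 : (1 : Matrix (Fin 3) (Fin 3) ℝ).trace = 3 := by
    simp [Matrix.trace_one]
  have hkey : ∀ ε : Matrix (Fin 3) (Fin 3) ℝ,
      (elasticityTensor E ν ε).trace = E / (1 - 2 * ν) * ε.trace := by
    intro ε
    simp only [elasticityTensor, Matrix.trace_add, Matrix.trace_smul, htr1, smul_eq_mul]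
    field_simp
    have h2ν' : (1 - ν * 2) ≠ 0 := by intro h; apply h2ν; linarith
    field_simp
    ring
  have hsymm : ∀ ε : Matrix (Fin 3) (Fin 3) ℝ, ε.IsSymm →
      ((1 + β * ε.trace)⁻¹ • elasticityTensor E ν ε).IsSymm := by
    intro ε hs
    simp only [Matrix.IsSymm, elasticityTensor, Matrix.transpose_smul, Matrix.transpose_add,
      Matrix.transpose_one] at hs ⊢
    rw [hs]
  refine ⟨?_, ?_, ?_⟩
  · rintro ε ⟨hs, hn⟩
    refine ⟨hsymm ε hs, ?_⟩
    simp only [Matrix.trace_smul, hkey, smul_eq_mul]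
    intro heq
    apply hn
    field_simp at heq
    nlinarith [heq]
  · rintro ε₁ ⟨hs1, hn1⟩ ε₂ ⟨hs2, hn2⟩ heq
    simp only at heq
    have htr := congrArg Matrix.trace heq
    simp only [Matrix.trace_smul, hkey, smul_eq_mul] at htr
    have ht : ε₁.trace = ε₂.trace := by
      field_simp at htr
      have hEt : E * ε₁.trace = E * ε₂.trace := by nlinarith [htr]
      exact mul_left_cancel₀ hE0 hEt
    rw [ht] at heq hn1
    have h2 := smul_right_injective (Matrix (Fin 3) (Fin 3) ℝ) (inv_ne_zero hn1) heq
    simp only [elasticityTensor, ht, add_left_inj] at h2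
    exact smul_right_injective (Matrix (Fin 3) (Fin 3) ℝ) ha h2
  · rintro T ⟨hTs, hTn⟩
    set d := E - β * (1 - 2 * ν) * T.trace with hd
    have hd0 : d ≠ 0 := sub_ne_zero.mpr (Ne.symm hTn)
    set t := (1 - 2 * ν) * T.trace / d with ht
    have hs : 1 + β * t = E / d := by
      rw [ht]; field_simp; ring
    have hs0 : 1 + β * t ≠ 0 := by
      rw [hs]; exact div_ne_zero hE0 hd0
    set ε := (E / (1 + ν))⁻¹ •
      ((1 + β * t) • T - (ν * E / ((1 - 2 * ν) * (1 + ν)) * t) • (1 : Matrix (Fin 3) (Fin 3) ℝ))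
      with hε
    have hεtr : ε.trace = t := by
      rw [hε]
      simp only [Matrix.trace_smul, Matrix.trace_sub, htr1, smul_eq_mul]
      rw [hs, ht]
      field_simp
      have h2ν' : (1 - ν * 2) ≠ 0 := by intro h; apply h2ν; linarith
      field_simp
      ring
    refine ⟨ε, ⟨?_, ?_⟩, ?_⟩
    · rw [hε]
      simp only [Matrix.IsSymm, Matrix.transpose_smul, Matrix.transpose_sub,
        Matrix.transpose_one] at hTs ⊢
      rw [hTs]
    · rw [hεtr]; exact hs0
    · simp only [hεtr, elasticityTensor]
      rw [hε, smul_smul, mul_inv_cancel₀ ha, one_smul]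
      rw [sub_add_cancel, smul_smul, inv_mul_cancel₀ hs0, one_smul]
end

section
/- Nonnegativity of the strain energy density for the density-dependent model: let E > 0, ν ∈ [0, 1/2), β ∈ ℝ, and let ε be a real symmetric 3×3 matrix with 1 + β tr ε > 0. Then the Cauchy stress T = 𝔼[ε]/(1 + β tr ε) satisfies the strain-energy-density bound ε : T ≥ (E/((1+ν)(1 + β tr ε))) ‖ε‖² ≥ 0, with ε : T = 0 if and only if ε = 0. -/
open Matrix

/-- Frobenius inner product `M : N = Σ_{i,j} M_{ij} N_{ij}`. -/
def matInner (M N : Matrix (Fin 3) (Fin 3) ℝ) : ℝ := ∑ i, ∑ j, M i j * N i j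

/-- Frobenius norm of a real `3 × 3` matrix. -/
noncomputable def frobNorm (M : Matrix (Fin 3) (Fin 3) ℝ) : ℝ :=
  Real.sqrt (matInner M M)

lemma matInner_self_nonneg (M : Matrix (Fin 3) (Fin 3) ℝ) : 0 ≤ matInner M M :=
  Finset.sum_nonneg fun _ _ => Finset.sum_nonneg fun _ _ => mul_self_nonneg _

lemma matInner_self_eq_zero {M : Matrix (Fin 3) (Fin 3) ℝ} (h : matInner M M = 0) : M = 0 := by
  have h1 := (Finset.sum_eq_zero_iff_of_nonneg
    (fun i _ => Finset.sum_nonneg fun j _ => mul_self_nonneg (M i j))).mp h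
  ext i j
  have h2 := (Finset.sum_eq_zero_iff_of_nonneg
    (fun j _ => mul_self_nonneg (M i j))).mp (h1 i (Finset.mem_univ i))
  exact mul_self_eq_zero.mp (h2 j (Finset.mem_univ j))

lemma matInner_expand (E ν : ℝ) (ε : Matrix (Fin 3) (Fin 3) ℝ) (d : ℝ) :
    matInner ε (d • elasticityTensor E ν ε) =
      d * ((E / (1 + ν)) * matInner ε ε +
        (ν * E / ((1 - 2 * ν) * (1 + ν))) * ε.trace ^ 2) := by
  simp only [matInner, elasticityTensor, Matrix.trace, Matrix.diag, Matrix.smul_apply,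
    Matrix.add_apply, Matrix.one_apply, smul_eq_mul, Fin.sum_univ_three]
  norm_num [Fin.ext_iff]
  ring

/-- Nonnegativity of the strain energy density for the density-dependent model: for `E > 0`,
`ν ∈ [0, 1/2)`, `β ∈ ℝ` and a real symmetric `3 × 3` matrix `ε` with `1 + β tr ε > 0`, the
Cauchy stress `T = 𝔼[ε]/(1 + β tr ε)` satisfies
`ε : T ≥ (E/((1+ν)(1 + β tr ε))) ‖ε‖² ≥ 0`, with `ε : T = 0` iff `ε = 0`. -/
theorem strain_energy_density_nonneg (E ν β : ℝ) (hE : 0 < E) (hν₁ : 0 ≤ ν) (hν₂ : ν < 1 / 2)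
    (ε : Matrix (Fin 3) (Fin 3) ℝ) (hε : ε.IsSymm) (hden : 0 < 1 + β * ε.trace) :
    matInner ε ((1 + β * ε.trace)⁻¹ • elasticityTensor E ν ε) ≥
      (E / ((1 + ν) * (1 + β * ε.trace))) * frobNorm ε ^ 2 ∧
    (E / ((1 + ν) * (1 + β * ε.trace))) * frobNorm ε ^ 2 ≥ 0 ∧
    (matInner ε ((1 + β * ε.trace)⁻¹ • elasticityTensor E ν ε) = 0 ↔ ε = 0) := by
  have hν : 0 < 1 + ν := by linarith
  have h2ν : 0 < 1 - 2 * ν := by linarith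
  have hsq : frobNorm ε ^ 2 = matInner ε ε := Real.sq_sqrt (matInner_self_nonneg ε)
  have hkey := matInner_expand E ν ε (1 + β * ε.trace)⁻¹
  have hc : 0 ≤ ν * E / ((1 - 2 * ν) * (1 + ν)) := by positivity
  have hdinv : 0 < (1 + β * ε.trace)⁻¹ := inv_pos.mpr hden
  have ha : 0 < E / (1 + ν) := by positivity
  have heq : (E / ((1 + ν) * (1 + β * ε.trace))) =
      (1 + β * ε.trace)⁻¹ * (E / (1 + ν)) := by
    rw [inv_mul_eq_div, div_div]
  refine ⟨?_, ?_, ?_, ?_⟩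
  · rw [hkey, hsq, heq, mul_assoc, mul_add]
    linarith [mul_nonneg hdinv.le (mul_nonneg hc (sq_nonneg ε.trace))]
  · have : 0 ≤ E / ((1 + ν) * (1 + β * ε.trace)) := by positivity
    have := sq_nonneg (frobNorm ε)
    positivity
  · intro h
    rw [hkey] at h
    have hterm : matInner ε ε = 0 := by
      have h1 : 0 ≤ (E / (1 + ν)) * matInner ε ε :=
        mul_nonneg ha.le (matInner_self_nonneg ε)
      have h2 : 0 ≤ (ν * E / ((1 - 2 * ν) * (1 + ν))) * ε.trace ^ 2 :=
        mul_nonneg hc (sq_nonneg _)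
      have hsum : (E / (1 + ν)) * matInner ε ε +
          (ν * E / ((1 - 2 * ν) * (1 + ν))) * ε.trace ^ 2 = 0 := by
        rcases mul_eq_zero.mp h with h' | h'
        · exact absurd h' (ne_of_gt hdinv)
        · exact h'
      nlinarith
    exact matInner_self_eq_zero hterm
  · intro h
    subst h
    simp [matInner]
end
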